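/- Hierarchy lemma (upper chain): with T[W] and R as defined from positive definite W, Q and antisymmetric U, one has (1 + T[W]) Tr[W Q⁻¹] ≤ (1 + R) Tr[W Q⁻¹] ≤ 2 Tr[W Q⁻¹], provided R ≤ 1. -/

import Mathlib

open Matrix

/-- the old Mathlib `Matrix.PosSemidef.sqrt` (removed upstream), spelled out verbatim -/
noncomputable def psdSqrt {n : ℕ} {A : Matrix (Fin n) (Fin n) ℝ} (hA : A.PosSemidef) :
    Matrix (Fin n) (Fin n) ℝ :=
  hA.1.eigenvectorUnitary.1 * diagonal (((↑) : ℝ → ℝ) ∘ Real.sqrt ∘ hA.1.eigenvalues) *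
    (star hA.1.eigenvectorUnitary : Matrix (Fin n) (Fin n) ℝ)

theorem psdSqrt_isHermitian {n : ℕ} {A : Matrix (Fin n) (Fin n) ℝ} (hA : A.PosSemidef) :
    (psdSqrt hA).IsHermitian := by
  unfold psdSqrt
  simpa [Matrix.star_eq_conjTranspose] using
    isHermitian_mul_mul_conjTranspose (hA.1.eigenvectorUnitary.1)
      (isHermitian_diagonal (((↑) : ℝ → ℝ) ∘ Real.sqrt ∘ hA.1.eigenvalues))

noncomputable def traceNorm {n : ℕ} (A : Matrix (Fin n) (Fin n) ℝ) : ℝ :=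
  (psdSqrt (Matrix.posSemidef_conjTranspose_mul_self A)).trace

noncomputable def singVals {n : ℕ} (A : Matrix (Fin n) (Fin n) ℝ) : Fin n → ℝ :=
  (psdSqrt_isHermitian (Matrix.posSemidef_conjTranspose_mul_self A)).eigenvalues

noncomputable def opNorm {n : ℕ} (A : Matrix (Fin n) (Fin n) ℝ) : ℝ :=
  ⨆ i, singVals A i

/-- the positive semidefinite square root, extended by `0` off psd matrices -/
noncomputable def mySqrt {n : ℕ} (A : Matrix (Fin n) (Fin n) ℝ) : Matrix (Fin n) (Fin n) ℝ :=
  open Classical in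
  if h : A.PosSemidef then psdSqrt h else 0

/-- the weight-dependent incompatibility measure `T[W]` -/
noncomputable def Tmeas {n : ℕ} (W Q U : Matrix (Fin n) (Fin n) ℝ) : ℝ :=
  traceNorm (mySqrt W * Q⁻¹ * U * Q⁻¹ * mySqrt W) / (W * Q⁻¹).trace

/-- the quantumness measure `R` -/
noncomputable def Rmeas {n : ℕ} (Q U : Matrix (Fin n) (Fin n) ℝ) : ℝ :=
  opNorm (mySqrt Q⁻¹ * U * mySqrt Q⁻¹)

lemma psdSqrt_posSemidef {n : ℕ} {A : Matrix (Fin n) (Fin n) ℝ} (hA : A.PosSemidef) :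
    (psdSqrt hA).PosSemidef := by
  unfold psdSqrt
  have hd : (diagonal (((↑) : ℝ → ℝ) ∘ Real.sqrt ∘ hA.1.eigenvalues)).PosSemidef :=
    posSemidef_diagonal_iff.mpr fun i => by simp [Real.sqrt_nonneg]
  simpa [Matrix.star_eq_conjTranspose] using
    hd.mul_mul_conjTranspose_same (hA.1.eigenvectorUnitary.1)

lemma psdSqrt_mul_self {n : ℕ} {A : Matrix (Fin n) (Fin n) ℝ} (hA : A.PosSemidef) :
    psdSqrt hA * psdSqrt hA = A := by
  have hs := hA.1.spectral_theorem
  rw [Unitary.conjStarAlgAut_apply] at hs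
  unfold psdSqrt
  have hV : (star (hA.1.eigenvectorUnitary : Matrix (Fin n) (Fin n) ℝ)) *
      (hA.1.eigenvectorUnitary : Matrix (Fin n) (Fin n) ℝ) = 1 :=
    Matrix.mem_unitaryGroup_iff'.mp hA.1.eigenvectorUnitary.2
  calc _ = (hA.1.eigenvectorUnitary : Matrix (Fin n) (Fin n) ℝ) *
        (diagonal (((↑) : ℝ → ℝ) ∘ Real.sqrt ∘ hA.1.eigenvalues) *
          ((star (hA.1.eigenvectorUnitary : Matrix (Fin n) (Fin n) ℝ)) *
            (hA.1.eigenvectorUnitary : Matrix (Fin n) (Fin n) ℝ)) *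
          diagonal (((↑) : ℝ → ℝ) ∘ Real.sqrt ∘ hA.1.eigenvalues)) *
        (star (hA.1.eigenvectorUnitary : Matrix (Fin n) (Fin n) ℝ)) := by
          simp only [Matrix.mul_assoc]
    _ = (hA.1.eigenvectorUnitary : Matrix (Fin n) (Fin n) ℝ) *
        diagonal (RCLike.ofReal ∘ hA.1.eigenvalues) *
        (star (hA.1.eigenvectorUnitary : Matrix (Fin n) (Fin n) ℝ)) := by
          rw [hV, Matrix.mul_one, diagonal_mul_diagonal]
          congr 2
          apply congrArg diagonal
          funext i
          simp [Real.mul_self_sqrt (hA.eigenvalues_nonneg i)]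
    _ = A := hs.symm

section Aux

variable {n : ℕ}

/-- Frobenius norm -/
noncomputable def frobN {n : ℕ} (A : Matrix (Fin n) (Fin n) ℝ) : ℝ :=
  Real.sqrt (Aᵀ * A).trace

lemma trace_transpose_mul_self_eq (A : Matrix (Fin n) (Fin n) ℝ) :
    (Aᵀ * A).trace = ∑ j, ∑ i, (A i j) ^ 2 := by
  simp [Matrix.trace, Matrix.mul_apply, Matrix.diag, sq]

lemma trace_transpose_mul_self_nonneg (A : Matrix (Fin n) (Fin n) ℝ) :
    0 ≤ (Aᵀ * A).trace := by
  rw [trace_transpose_mul_self_eq]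
  positivity

lemma frobN_nonneg (A : Matrix (Fin n) (Fin n) ℝ) : 0 ≤ frobN A := Real.sqrt_nonneg _

lemma frobN_sq (A : Matrix (Fin n) (Fin n) ℝ) : frobN A ^ 2 = (Aᵀ * A).trace :=
  Real.sq_sqrt (trace_transpose_mul_self_nonneg A)

lemma frobN_transpose (A : Matrix (Fin n) (Fin n) ℝ) : frobN Aᵀ = frobN A := by
  unfold frobN
  rw [Matrix.transpose_transpose, Matrix.trace_mul_comm]

/-- Cauchy–Schwarz for the Frobenius inner product. -/
lemma trace_CS (A B : Matrix (Fin n) (Fin n) ℝ) :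
    (Aᵀ * B).trace ≤ frobN A * frobN B := by
  have h1 : (Aᵀ * B).trace = ∑ p : Fin n × Fin n, A p.2 p.1 * B p.2 p.1 := by
    rw [Fintype.sum_prod_type]
    simp [Matrix.trace, Matrix.mul_apply, Matrix.diag]
  have h2 : (Aᵀ * A).trace = ∑ p : Fin n × Fin n, (A p.2 p.1) ^ 2 := by
    rw [Fintype.sum_prod_type, trace_transpose_mul_self_eq]
  have h3 : (Bᵀ * B).trace = ∑ p : Fin n × Fin n, (B p.2 p.1) ^ 2 := by
    rw [Fintype.sum_prod_type, trace_transpose_mul_self_eq]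
  rw [h1]
  unfold frobN
  rw [h2, h3]
  exact Real.sum_mul_le_sqrt_mul_sqrt Finset.univ _ _

/-- real spectral decomposition, with transposes -/
lemma herm_decomp {P : Matrix (Fin n) (Fin n) ℝ} (hP : P.IsHermitian) :
    ∃ V : Matrix (Fin n) (Fin n) ℝ,
      Vᵀ * V = 1 ∧ V * Vᵀ = 1 ∧ P = V * Matrix.diagonal hP.eigenvalues * Vᵀ := by
  refine ⟨(Matrix.IsHermitian.eigenvectorUnitary hP : Matrix (Fin n) (Fin n) ℝ), ?_, ?_, ?_⟩
  · rw [← Matrix.conjTranspose_eq_transpose_of_trivial, ← Matrix.star_eq_conjTranspose]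
    exact Matrix.mem_unitaryGroup_iff'.mp (Matrix.IsHermitian.eigenvectorUnitary hP).2
  · rw [← Matrix.conjTranspose_eq_transpose_of_trivial, ← Matrix.star_eq_conjTranspose]
    exact Matrix.mem_unitaryGroup_iff.mp (Matrix.IsHermitian.eigenvectorUnitary hP).2
  · have := hP.spectral_theorem
    rwa [Unitary.conjStarAlgAut_apply, RCLike.ofReal_real_eq_id, Function.id_comp, Matrix.star_eq_conjTranspose,
      Matrix.conjTranspose_eq_transpose_of_trivial] at this

lemma opNorm_nonneg (hn : 0 < n) (A : Matrix (Fin n) (Fin n) ℝ) : 0 ≤ opNorm A := by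
  have : Nonempty (Fin n) := ⟨⟨0, hn⟩⟩
  obtain ⟨i⟩ := this
  exact le_trans ((psdSqrt_posSemidef (Matrix.posSemidef_conjTranspose_mul_self A)).eigenvalues_nonneg i)
    (le_ciSup (Set.Finite.bddAbove (Set.finite_range _)) i)

lemma singVals_le_opNorm (A : Matrix (Fin n) (Fin n) ℝ) (i : Fin n) :
    singVals A i ≤ opNorm A :=
  le_ciSup (Set.Finite.bddAbove (Set.finite_range _)) i

lemma singVals_nonneg (A : Matrix (Fin n) (Fin n) ℝ) (i : Fin n) : 0 ≤ singVals A i :=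
  (psdSqrt_posSemidef (Matrix.posSemidef_conjTranspose_mul_self A)).eigenvalues_nonneg i

lemma trace_conj_diagonal (d : Fin n → ℝ) (C : Matrix (Fin n) (Fin n) ℝ) :
    (Cᵀ * Matrix.diagonal d * C).trace = ∑ j, ∑ k, d k * (C k j) ^ 2 := by
  have h : ∀ j, (Cᵀ * (Matrix.diagonal d * C)) j j = ∑ k, d k * (C k j) ^ 2 := by
    intro j
    rw [Matrix.mul_apply]
    apply Finset.sum_congr rfl
    intro k _
    rw [Matrix.diagonal_mul, Matrix.transpose_apply]
    ring
  rw [Matrix.mul_assoc]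
  exact Finset.sum_congr rfl fun j _ => h j

/-- `‖M·B‖_F ≤ opNorm M · ‖B‖_F` -/
lemma frobN_mul_le (hn : 0 < n) (M B : Matrix (Fin n) (Fin n) ℝ) :
    frobN (M * B) ≤ opNorm M * frobN B := by
  set t := opNorm M with ht
  have hps := Matrix.posSemidef_conjTranspose_mul_self M
  set P := psdSqrt hps with hPdef
  have hPP : P * P = Mᵀ * M := by
    rw [psdSqrt_mul_self hps, Matrix.conjTranspose_eq_transpose_of_trivial]
  obtain ⟨V, hV1, hV2, hPd⟩ := herm_decomp (psdSqrt_isHermitian hps)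
  set σ : Fin n → ℝ := (psdSqrt_isHermitian hps).eigenvalues with hσ
  have hσval : σ = singVals M := rfl
  set C := Vᵀ * B with hC
  have hkey : (M * B)ᵀ * (M * B) = Cᵀ * Matrix.diagonal (fun i => σ i * σ i) * C := by
    have h1 : (M * B)ᵀ * (M * B) = Bᵀ * (P * P) * B := by
      rw [hPP, Matrix.transpose_mul]
      noncomm_ring
    rw [h1, hPdef, hPd, hC, Matrix.transpose_mul, Matrix.transpose_transpose,
      ← Matrix.diagonal_mul_diagonal]
    have h2 : Vᵀ * (V * (Matrix.diagonal σ * Vᵀ)) = Matrix.diagonal σ * Vᵀ := by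
      rw [← Matrix.mul_assoc, hV1, Matrix.one_mul]
    simp only [Matrix.mul_assoc, h2]
  have hCC : (Cᵀ * C).trace = (Bᵀ * B).trace := by
    rw [hC, Matrix.transpose_mul, Matrix.transpose_transpose]
    rw [show Bᵀ * V * (Vᵀ * B) = Bᵀ * (V * Vᵀ) * B by noncomm_ring, hV2, Matrix.mul_one]
  have htrle : ((M * B)ᵀ * (M * B)).trace ≤ t ^ 2 * (Bᵀ * B).trace := by
    rw [hkey, trace_conj_diagonal, ← hCC, trace_transpose_mul_self_eq, Finset.mul_sum]
    apply Finset.sum_le_sum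
    intro j _
    rw [Finset.mul_sum]
    apply Finset.sum_le_sum
    intro k _
    have h0 : 0 ≤ σ k := by rw [hσval]; exact singVals_nonneg M k
    have h1 : σ k ≤ t := by rw [hσval, ht]; exact singVals_le_opNorm M k
    have : σ k * σ k ≤ t ^ 2 := by nlinarith
    nlinarith [sq_nonneg (C k j)]
  have htnn : 0 ≤ t := opNorm_nonneg hn M
  calc frobN (M * B) = Real.sqrt (((M * B)ᵀ * (M * B)).trace) := rfl
    _ ≤ Real.sqrt (t ^ 2 * (Bᵀ * B).trace) := Real.sqrt_le_sqrt htrle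
    _ = t * frobN B := by
        rw [Real.sqrt_mul (sq_nonneg t), Real.sqrt_sq htnn]; rfl

/-- trace-norm Hölder: `‖Y·Z‖₁ ≤ ‖Y‖_F · ‖Z‖_F` -/
lemma traceNorm_mul_le (Y Z : Matrix (Fin n) (Fin n) ℝ) :
    traceNorm (Y * Z) ≤ frobN Y * frobN Z := by
  set X := Y * Z with hX
  have hps := Matrix.posSemidef_conjTranspose_mul_self X
  set P := psdSqrt hps with hPdef
  have hPP : P * P = Xᵀ * X := by
    rw [psdSqrt_mul_self hps, Matrix.conjTranspose_eq_transpose_of_trivial]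
  obtain ⟨V, hV1, hV2, hPd⟩ := herm_decomp (psdSqrt_isHermitian hps)
  set σ : Fin n → ℝ := (psdSqrt_isHermitian hps).eigenvalues with hσ
  have hσnn : ∀ i, 0 ≤ σ i := (psdSqrt_posSemidef hps).eigenvalues_nonneg
  set D := Matrix.diagonal σ with hD
  set Dp := Matrix.diagonal (fun i => if σ i = 0 then 0 else (σ i)⁻¹) with hDp
  set E := Matrix.diagonal (fun i => if σ i = 0 then (0 : ℝ) else 1) with hE
  -- diagonal algebra
  have hDDp : D * Dp = E := by
    rw [hD, hDp, hE, Matrix.diagonal_mul_diagonal]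
    apply congrArg Matrix.diagonal; funext i
    by_cases h : σ i = 0 <;> simp [h, mul_inv_cancel₀ (a := σ i)]
  have hDpE : Dp * E = Dp := by
    rw [hDp, hE, Matrix.diagonal_mul_diagonal]
    apply congrArg Matrix.diagonal; funext i
    by_cases h : σ i = 0 <;> simp [h]
  have hDpT : Dpᵀ = Dp := Matrix.diagonal_transpose _
  have hXXV : Vᵀ * (Xᵀ * X) * V = D * D := by
    rw [← hPP, hPdef, hPd]
    have h2 : Vᵀ * (V * (D * Vᵀ)) = D * Vᵀ := by
      rw [← Matrix.mul_assoc, hV1, Matrix.one_mul]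
    have h3 : Vᵀ * V = 1 := hV1
    calc Vᵀ * (V * D * Vᵀ * (V * D * Vᵀ)) * V
        = (Vᵀ * V) * D * (Vᵀ * V) * D * (Vᵀ * V) := by noncomm_ring
      _ = D * D := by rw [h3]; noncomm_ring
  set Uu := X * V * Dp with hUu
  have hUUE : Uuᵀ * Uu = E * E := by
    rw [hUu]
    have : (X * V * Dp)ᵀ = Dp * (Vᵀ * Xᵀ) := by
      rw [Matrix.transpose_mul, Matrix.transpose_mul, hDpT]
    rw [this]
    have hcomm : Dp * D = D * Dp := by
      rw [hD, hDp, Matrix.diagonal_mul_diagonal, Matrix.diagonal_mul_diagonal]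
      apply congrArg Matrix.diagonal; funext i; ring
    calc Dp * (Vᵀ * Xᵀ) * (X * V * Dp)
        = Dp * (Vᵀ * (Xᵀ * X) * V) * Dp := by noncomm_ring
      _ = Dp * (D * D) * Dp := by rw [hXXV]
      _ = (Dp * D) * (D * Dp) := by noncomm_ring
      _ = (D * Dp) * (D * Dp) := by rw [hcomm]
      _ = E * E := by rw [hDDp]
  have hEE : E * E = E := by
    rw [hE, Matrix.diagonal_mul_diagonal]
    apply congrArg Matrix.diagonal; funext i
    by_cases h : σ i = 0 <;> simp [h]
  have hUU : Uuᵀ * Uu = E := by rw [hUUE, hEE]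
  have hUE : Uu * E = Uu := by
    rw [hUu, Matrix.mul_assoc, hDpE]
  set Pr := Uu * Uuᵀ with hPr
  have hPrT : Prᵀ = Pr := by
    rw [hPr, Matrix.transpose_mul, Matrix.transpose_transpose]
  have hPr2 : Pr * Pr = Pr := by
    calc Pr * Pr = Uu * (Uuᵀ * Uu) * Uuᵀ := by rw [hPr]; noncomm_ring
      _ = Uu * E * Uuᵀ := by rw [hUU]
      _ = Pr := by rw [hUE, hPr]
  -- the key trace identity
  have hZVYU : (Z * V)ᵀ * (Yᵀ * Uu) = Vᵀ * (Xᵀ * X) * V * Dp := by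
    rw [Matrix.transpose_mul, hUu, hX]
    calc Vᵀ * Zᵀ * (Yᵀ * (Y * Z * V * Dp))
        = Vᵀ * ((Y * Z)ᵀ * (Y * Z)) * V * Dp := by
          rw [Matrix.transpose_mul]; noncomm_ring
      _ = Vᵀ * (Xᵀ * X) * V * Dp := by rw [← hX]
  have hZVYU' : (Z * V)ᵀ * (Yᵀ * Uu) = D := by
    rw [hZVYU, hXXV]
    rw [hD, hDp, Matrix.diagonal_mul_diagonal, Matrix.diagonal_mul_diagonal]
    apply congrArg Matrix.diagonal; funext i
    by_cases h : σ i = 0 <;> simp [h]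
  have htrace : traceNorm X = D.trace := by
    show P.trace = D.trace
    rw [hPdef, hPd, Matrix.trace_mul_comm, ← Matrix.mul_assoc, hV1, Matrix.one_mul]
  -- Frobenius norms of the factors
  have hfZV : frobN (Z * V) = frobN Z := by
    unfold frobN
    congr 1
    rw [Matrix.transpose_mul]
    rw [show Vᵀ * Zᵀ * (Z * V) = Vᵀ * (Zᵀ * Z) * V by noncomm_ring,
      Matrix.trace_mul_cycle, ← Matrix.mul_assoc, hV2, Matrix.one_mul]
  have hfYU : frobN (Yᵀ * Uu) ≤ frobN Y := by
    have h1 : ((Yᵀ * Uu)ᵀ * (Yᵀ * Uu)).trace = ((Y * Yᵀ) * Pr).trace := by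
      have e1 : (Yᵀ * Uu)ᵀ * (Yᵀ * Uu) = Uuᵀ * ((Y * Yᵀ) * Uu) := by
        rw [Matrix.transpose_mul, Matrix.transpose_transpose]
        noncomm_ring
      rw [e1, Matrix.trace_mul_comm, Matrix.mul_assoc, ← hPr]
    have h2 : 0 ≤ ((Y - Pr * Y)ᵀ * (Y - Pr * Y)).trace :=
      trace_transpose_mul_self_nonneg _
    have h3 : ((Y - Pr * Y)ᵀ * (Y - Pr * Y)).trace
        = (Yᵀ * Y).trace - ((Y * Yᵀ) * Pr).trace := by
      have hexp : (Y - Pr * Y)ᵀ * (Y - Pr * Y)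
          = Yᵀ * Y - Yᵀ * (Pr * Y) - (Yᵀ * Prᵀ) * Y + Yᵀ * Prᵀ * (Pr * Y) := by
        rw [Matrix.transpose_sub, Matrix.transpose_mul]
        noncomm_ring
      rw [hexp]
      have hPrPr : Yᵀ * Prᵀ * (Pr * Y) = Yᵀ * (Pr * Y) := by
        rw [hPrT, show Yᵀ * Pr * (Pr * Y) = Yᵀ * (Pr * Pr) * Y by noncomm_ring, hPr2,
          Matrix.mul_assoc]
      have hPrT' : (Yᵀ * Prᵀ) * Y = Yᵀ * (Pr * Y) := by
        rw [hPrT, Matrix.mul_assoc]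
      rw [hPrPr, hPrT']
      rw [Matrix.trace_add, Matrix.trace_sub, Matrix.trace_sub]
      have : (Yᵀ * (Pr * Y)).trace = ((Y * Yᵀ) * Pr).trace := by
        rw [Matrix.trace_mul_cycle]
        rw [Matrix.mul_assoc]
        rw [Matrix.trace_mul_comm]
      rw [this]; ring
    have h4 : ((Yᵀ * Uu)ᵀ * (Yᵀ * Uu)).trace ≤ (Yᵀ * Y).trace := by
      rw [h1]; linarith
    unfold frobN
    exact Real.sqrt_le_sqrt h4
  -- put it together
  have hCS : D.trace ≤ frobN (Z * V) * frobN (Yᵀ * Uu) := by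
    rw [← hZVYU']
    exact trace_CS _ _
  rw [htrace]
  calc D.trace ≤ frobN (Z * V) * frobN (Yᵀ * Uu) := hCS
    _ = frobN Z * frobN (Yᵀ * Uu) := by rw [hfZV]
    _ ≤ frobN Z * frobN Y := by
        exact mul_le_mul_of_nonneg_left hfYU (frobN_nonneg Z)
    _ = frobN Y * frobN Z := mul_comm _ _

end Aux

section Main

variable {n : ℕ}

lemma mySqrt_psd_props {A : Matrix (Fin n) (Fin n) ℝ} (hA : A.PosSemidef) :
    mySqrt A * mySqrt A = A ∧ (mySqrt A)ᵀ = mySqrt A := by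
  have h : mySqrt A = psdSqrt hA := dif_pos hA
  constructor
  · rw [h]; exact psdSqrt_mul_self hA
  · rw [h, ← Matrix.conjTranspose_eq_transpose_of_trivial]
    exact psdSqrt_isHermitian hA

/-- key bound: `‖√W Q⁻¹ U Q⁻¹ √W‖₁ ≤ R · Tr[W Q⁻¹]` -/
lemma key_bound (hn : 0 < n) (W Q U : Matrix (Fin n) (Fin n) ℝ)
    (hW : W.PosDef) (hQ : Q.PosDef) :
    traceNorm (mySqrt W * Q⁻¹ * U * Q⁻¹ * mySqrt W) ≤ Rmeas Q U * (W * Q⁻¹).trace := by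
  have hQi : (Q⁻¹).PosDef := hQ.inv
  obtain ⟨hsW2, hsWT⟩ := mySqrt_psd_props hW.posSemidef
  obtain ⟨hsQ2, hsQT⟩ := mySqrt_psd_props hQi.posSemidef
  set sW := mySqrt W
  set sQ := mySqrt Q⁻¹
  set A := sW * sQ with hA
  set M := sQ * U * sQ with hM
  have hAT : Aᵀ = sQ * sW := by rw [hA, Matrix.transpose_mul, hsWT, hsQT]
  have hS : sW * Q⁻¹ * U * Q⁻¹ * sW = A * (M * Aᵀ) := by
    rw [hAT, hA, hM, ← hsQ2]
    simp only [Matrix.mul_assoc]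
  have h1 : traceNorm (sW * Q⁻¹ * U * Q⁻¹ * sW) ≤ frobN A * frobN (M * Aᵀ) := by
    rw [hS]; exact traceNorm_mul_le A (M * Aᵀ)
  have h2 : frobN (M * Aᵀ) ≤ opNorm M * frobN Aᵀ := frobN_mul_le hn M Aᵀ
  have h3 : frobN A * frobN (M * Aᵀ) ≤ opNorm M * (frobN A * frobN Aᵀ) := by
    calc frobN A * frobN (M * Aᵀ) ≤ frobN A * (opNorm M * frobN Aᵀ) :=
          mul_le_mul_of_nonneg_left h2 (frobN_nonneg A)
      _ = opNorm M * (frobN A * frobN Aᵀ) := by ring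
  have h4 : frobN A * frobN Aᵀ = (W * Q⁻¹).trace := by
    rw [frobN_transpose, ← pow_two, frobN_sq]
    have e : Aᵀ * A = sQ * W * sQ := by rw [hAT, hA, ← hsW2]; noncomm_ring
    rw [e, Matrix.trace_mul_cycle, hsQ2]
    exact Matrix.trace_mul_comm _ _
  have hR : Rmeas Q U = opNorm M := rfl
  rw [hR]
  calc traceNorm (sW * Q⁻¹ * U * Q⁻¹ * sW) ≤ frobN A * frobN (M * Aᵀ) := h1
    _ ≤ opNorm M * (frobN A * frobN Aᵀ) := h3
    _ = opNorm M * (W * Q⁻¹).trace := by rw [h4]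

lemma trace_pos (hn : 0 < n) (W Q : Matrix (Fin n) (Fin n) ℝ)
    (hW : W.PosDef) (hQ : Q.PosDef) : 0 < (W * Q⁻¹).trace := by
  have hQi : (Q⁻¹).PosDef := hQ.inv
  obtain ⟨hsW2, hsWT⟩ := mySqrt_psd_props hW.posSemidef
  obtain ⟨hsQ2, hsQT⟩ := mySqrt_psd_props hQi.posSemidef
  set sW := mySqrt W
  set sQ := mySqrt Q⁻¹
  set A := sW * sQ with hA
  have hAT : Aᵀ = sQ * sW := by rw [hA, Matrix.transpose_mul, hsWT, hsQT]
  have htr : (W * Q⁻¹).trace = (Aᵀ * A).trace := by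
    have e : Aᵀ * A = sQ * W * sQ := by rw [hAT, hA, ← hsW2]; noncomm_ring
    rw [e, Matrix.trace_mul_cycle, hsQ2]
    exact Matrix.trace_mul_comm _ _
  have hdetW : (sW).det ≠ 0 := by
    intro h
    have : W.det = 0 := by rw [← hsW2, Matrix.det_mul, h, mul_zero]
    exact (ne_of_gt hW.det_pos) this
  have hdetQ : (sQ).det ≠ 0 := by
    intro h
    have : (Q⁻¹).det = 0 := by rw [← hsQ2, Matrix.det_mul, h, mul_zero]
    exact (ne_of_gt hQi.det_pos) this
  have hdetA : A.det ≠ 0 := by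
    rw [hA, Matrix.det_mul]
    exact mul_ne_zero hdetW hdetQ
  have hAne : A ≠ 0 := by
    intro h
    rw [h] at hdetA
    have : Nonempty (Fin n) := ⟨⟨0, hn⟩⟩
    simp [Matrix.det_zero] at hdetA
  obtain ⟨i, j, hij⟩ : ∃ i j, A i j ≠ 0 := by
    by_contra h
    push_neg at h
    exact hAne (Matrix.ext fun i j => h i j)
  rw [htr, trace_transpose_mul_self_eq]
  have h1 : 0 < (A i j) ^ 2 := by positivity
  have h2 : (A i j) ^ 2 ≤ ∑ i', (A i' j) ^ 2 :=
    Finset.single_le_sum (fun k _ => sq_nonneg (A k j)) (Finset.mem_univ i)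
  have h3 : ∑ i', (A i' j) ^ 2 ≤ ∑ j', ∑ i', (A i' j') ^ 2 :=
    Finset.single_le_sum (f := fun j' => ∑ i', (A i' j') ^ 2)
      (fun k _ => Finset.sum_nonneg fun l _ => sq_nonneg _) (Finset.mem_univ j)
  linarith

end Main

/-- Hierarchy (upper chain): (1 + T[W])·Tr[WQ⁻¹] ≤ (1 + R)·Tr[WQ⁻¹] ≤ 2·Tr[WQ⁻¹] when R ≤ 1. -/
theorem hierarchy_upper_chain {n : ℕ} (W Q U : Matrix (Fin n) (Fin n) ℝ)
    (hW : W.PosDef) (hQ : Q.PosDef) (hU : Uᵀ = -U) (hR : Rmeas Q U ≤ 1) :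
    (1 + Tmeas W Q U) * (W * Q⁻¹).trace ≤ (1 + Rmeas Q U) * (W * Q⁻¹).trace ∧
      (1 + Rmeas Q U) * (W * Q⁻¹).trace ≤ 2 * (W * Q⁻¹).trace := by
  rcases Nat.eq_zero_or_pos n with h0 | hn
  · subst h0
    have htr : (W * Q⁻¹).trace = 0 := by
      simp [Matrix.trace]
    rw [htr]
    simp
  · have htr : 0 < (W * Q⁻¹).trace := trace_pos hn W Q hW hQ
    have hkey := key_bound hn W Q U hW hQ
    have hTm : Tmeas W Q U ≤ Rmeas Q U := by
      rw [Tmeas, div_le_iff₀ htr]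
      exact hkey
    constructor
    · exact mul_le_mul_of_nonneg_right (by linarith) htr.le
    · exact mul_le_mul_of_nonneg_right (by linarith) htr.le
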